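/- Let m ≥ 1 be an integer and x > 0 a real number with u_m ≤ x. Then m·K ≤ 2α·√x − 2α² + (3/2)·K; in particular m ≤ (2α·√x)/K + 3/2. (Consequently, if at most m full exploration phases, each comprising K forced pulls with per-pull regret at most 1, start before time x, the exploration regret on [1, x] is at most 2α√x + (3/2)K and each arm is pulled at most (2α√x)/K + 3/2 times during exploration.) -/

import Mathlib

/-- For the diminishing-exploration schedule `u` (with parameters
`K ≥ 1`, `α > 0`), if `m ≥ 1` and `x > 0` satisfy `u m ≤ x`, then
`m·K ≤ 2α·√x − 2α² + (3/2)·K`, and in particular `m ≤ (2α·√x)/K + 3/2`. -/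
theorem diminishing_exploration_count_bound
    (K α : ℝ) (hK : 1 ≤ K) (hα : 0 < α) (u : ℕ → ℝ)
    (h1 : u 1 = ((⌈(α - K / (4 * α)) ^ 2⌉ : ℤ) : ℝ))
    (hrec : ∀ n : ℕ, 2 ≤ n →
      u n = ((⌈u (n - 1) + (K / α) * Real.sqrt (u (n - 1)) + K ^ 2 / (4 * α ^ 2)⌉ : ℤ) : ℝ))
    (m : ℕ) (hm : 1 ≤ m) (x : ℝ) (hx : 0 < x) (hux : u m ≤ x) :
    (m : ℝ) * K ≤ 2 * α * Real.sqrt x - 2 * α ^ 2 + (3 / 2) * K ∧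
      (m : ℝ) ≤ (2 * α * Real.sqrt x) / K + 3 / 2 := by
  have hK0 : (0:ℝ) < K := lt_of_lt_of_le one_pos hK
  set c : ℝ := K / (2 * α) with hcdef
  have hαne : α ≠ 0 := hα.ne'
  have hc : 0 < c := div_pos hK0 (by positivity)
  have e2c : 2 * c = K / α := by rw [hcdef]; field_simp
  have ec2 : c ^ 2 = K ^ 2 / (4 * α ^ 2) := by
    rw [hcdef]; field_simp; ring
  have key : ∀ n, 1 ≤ n → 0 ≤ u n ∧ α + ((n:ℝ) - 3/2) * c ≤ Real.sqrt (u n) := by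
    intro n hn
    induction n, hn using Nat.le_induction with
    | base =>
      have h0 : (α - K/(4*α))^2 ≤ u 1 := by rw [h1]; exact Int.le_ceil _
      have hnn : 0 ≤ u 1 := le_trans (sq_nonneg _) h0
      refine ⟨hnn, ?_⟩
      have hs := Real.sqrt_le_sqrt h0
      rw [Real.sqrt_sq_eq_abs] at hs
      have h2 : α - K/(4*α) ≤ Real.sqrt (u 1) := le_trans (le_abs_self _) hs
      have heq : α + (((1:ℕ):ℝ) - 3/2) * c = α - K/(4*α) := by
        rw [hcdef]; push_cast; field_simp; ring
      rw [heq]; exact h2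
    | succ n hn ih =>
      obtain ⟨hnn, hb⟩ := ih
      have hsn : 0 ≤ Real.sqrt (u n) := Real.sqrt_nonneg _
      have hsq : Real.sqrt (u n) ^ 2 = u n := Real.sq_sqrt hnn
      have hr := hrec (n+1) (by omega)
      simp only [Nat.add_sub_cancel] at hr
      have h0 : (Real.sqrt (u n) + c)^2 ≤ u (n+1) := by
        rw [hr]
        refine le_trans (le_of_eq ?_) (Int.le_ceil _)
        linear_combination hsq + Real.sqrt (u n) * e2c + ec2
      have hnn' : 0 ≤ u (n+1) := le_trans (sq_nonneg _) h0
      refine ⟨hnn', ?_⟩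
      have hs := Real.sqrt_le_sqrt h0
      rw [Real.sqrt_sq (by positivity)] at hs
      push_cast
      push_cast at hb
      nlinarith [hs, hb]
  obtain ⟨hnn, hb⟩ := key m hm
  have hsx : Real.sqrt (u m) ≤ Real.sqrt x := Real.sqrt_le_sqrt hux
  have h1' : α + ((m:ℝ) - 3/2) * c ≤ Real.sqrt x := le_trans hb hsx
  have hc2 : c * (2*α) = K := by rw [hcdef]; field_simp
  have hmul := mul_le_mul_of_nonneg_left h1' (by positivity : (0:ℝ) ≤ 2*α)
  have part1 : (m : ℝ) * K ≤ 2 * α * Real.sqrt x - 2 * α ^ 2 + (3 / 2) * K := by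
    nlinarith [hmul, hc2]
  refine ⟨part1, ?_⟩
  have hdiv : (2*α*Real.sqrt x)/K * K = 2*α*Real.sqrt x :=
    div_mul_cancel₀ _ hK0.ne'
  nlinarith [part1, sq_nonneg α, hdiv, hK0]
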